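/- Let X be a locally profinite topological space with a countable basis of open sets and V a module over a commutative ring R. Then the natural map C_c^∞(X, R) ⊗_R V → C_c^∞(X, V) is an isomorphism, and C_c^∞(X, R) is a free R-module. -/

import Mathlib

open TensorProduct

/-- `C_c^∞(X, V)`: the `R`-module of locally constant, compactly supported functions
from `X` to an `R`-module `V`. -/
def Ccinf (X : Type*) [TopologicalSpace X] (R : Type*) [CommRing R]
    (V : Type*) [AddCommGroup V] [Module R V] : Submodule R (X → V) where
  carrier := {f | IsLocallyConstant f ∧ HasCompactSupport f}
  zero_mem' := ⟨IsLocallyConstant.const 0, by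
    simpa [HasCompactSupport, tsupport, Function.support] using isCompact_empty⟩
  add_mem' := fun hf hg => ⟨hf.1.comp₂ hg.1 (· + ·), hf.2.add hg.2⟩
  smul_mem' := fun c f hf => ⟨hf.1.comp (c • ·), hf.2.mono (by
    intro x hx
    simp only [Function.mem_support, Pi.smul_apply] at hx ⊢
    exact fun h => hx (by rw [h, smul_zero]))⟩

namespace Stmt15Aux

attribute [local instance] Classical.propDecidable

variable {X : Type*} [TopologicalSpace X]

section Cells

variable (U : ℕ → Set X)

/-- The cell at stage `n` determined by the membership pattern `s`. -/
def cellAt (n : ℕ) (s : Finset ℕ) : Set X := {x | ∀ i < n, (x ∈ U i ↔ i ∈ s)}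

/-- The pairs `(n, s)` indexing the basis. -/
def Good (p : ℕ × Finset ℕ) : Prop :=
  p.2 ⊆ Finset.range p.1 ∧ (cellAt U (p.1 + 1) (insert p.1 p.2)).Nonempty ∧
    (p.2 = ∅ ∨ (cellAt U (p.1 + 1) p.2).Nonempty)

/-- The basis set attached to a pair `(n, s)`. -/
def BSet (p : ℕ × Finset ℕ) : Set X := cellAt U (p.1 + 1) (insert p.1 p.2)

/-- The index type of the basis. -/
abbrev Idx := {p : ℕ × Finset ℕ // Good U p}

variable {U}

lemma cellAt_inj {n : ℕ} {s t : Finset ℕ} (hs : s ⊆ Finset.range n)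
    (ht : t ⊆ Finset.range n) {x : X} (hxs : x ∈ cellAt U n s) (hxt : x ∈ cellAt U n t) :
    s = t := by
  ext i
  by_cases hi : i < n
  · rw [← hxs i hi, hxt i hi]
  · constructor
    · intro h; exact absurd (Finset.mem_range.1 (hs h)) hi
    · intro h; exact absurd (Finset.mem_range.1 (ht h)) hi

lemma mem_U_of_mem_BSet {p : ℕ × Finset ℕ} {x : X} (hx : x ∈ BSet U p) : x ∈ U p.1 :=
  (hx p.1 (Nat.lt_succ_self _)).2 (Finset.mem_insert_self _ _)

lemma not_self_mem {p : ℕ × Finset ℕ} (hp : Good U p) : p.1 ∉ p.2 := by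
  intro h
  exact absurd (Finset.mem_range.1 (hp.1 h)) (lt_irrefl _)

lemma BSet_inj {p q : ℕ × Finset ℕ} (hp : Good U p) (hq : Good U q) (h : p.1 = q.1)
    {x : X} (hxp : x ∈ BSet U p) (hxq : x ∈ BSet U q) : p = q := by
  have hap := not_self_mem hp
  have haq := not_self_mem hq
  obtain ⟨a, s⟩ := p
  obtain ⟨b, t⟩ := q
  dsimp at h hap haq ⊢
  subst h
  have hs : insert a s ⊆ Finset.range (a + 1) := by
    intro i hi
    rcases Finset.mem_insert.1 hi with rfl | hi
    · exact Finset.mem_range.2 (Nat.lt_succ_self _)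
    · exact Finset.mem_range.2 (Nat.lt_succ_of_lt (Finset.mem_range.1 (hp.1 hi)))
  have ht : insert a t ⊆ Finset.range (a + 1) := by
    intro i hi
    rcases Finset.mem_insert.1 hi with rfl | hi
    · exact Finset.mem_range.2 (Nat.lt_succ_self _)
    · exact Finset.mem_range.2 (Nat.lt_succ_of_lt (Finset.mem_range.1 (hq.1 hi)))
  have heq : insert a s = insert a t := cellAt_inj hs ht hxp hxq
  have h2 : s = t := by
    have h3 := congrArg (fun (u : Finset ℕ) => u.erase a) heq
    rwa [Finset.erase_insert hap, Finset.erase_insert haq] at h3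
  rw [h2]

end Cells

section Topology

variable [T2Space X] (U : ℕ → Set X)

variable {U} in
lemma isClopen_cellAt (hU : ∀ n, IsCompact (U n) ∧ IsOpen (U n)) (n : ℕ) (s : Finset ℕ) :
    IsClopen (cellAt U n s) := by
  have : cellAt U n s = ⋂ i ∈ Finset.range n, (if i ∈ s then U i else (U i)ᶜ) := by
    ext x
    simp only [cellAt, Set.mem_setOf_eq, Set.mem_iInter, Finset.mem_range]
    constructor
    · intro h i hi
      by_cases hs : i ∈ s
      · simpa [hs] using (h i hi).2 hs
      · simpa [hs] using fun hx => hs ((h i hi).1 hx)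
    · intro h i hi
      have := h i hi
      by_cases hs : i ∈ s
      · simp only [hs, if_true] at this; simp [hs, this]
      · simp only [hs, if_false] at this; simp [hs]; exact fun hx => absurd hx this
  rw [this]
  constructor
  · refine isClosed_biInter fun i _ => ?_
    split
    · exact (hU i).1.isClosed
    · exact (hU i).2.isClosed_compl
  · refine isOpen_biInter_finset fun i _ => ?_
    split
    · exact (hU i).2
    · exact (hU i).1.isClosed.isOpen_compl

variable {U} in
lemma isCompact_BSet (hU : ∀ n, IsCompact (U n) ∧ IsOpen (U n)) (p : ℕ × Finset ℕ) :
    IsCompact (BSet U p) :=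
  IsCompact.of_isClosed_subset (hU p.1).1 (isClopen_cellAt hU _ _).1
    (fun _ hx => mem_U_of_mem_BSet hx)

variable (R : Type*) [CommRing R] (V : Type*) [AddCommGroup V] [Module R V]

variable {U} in
lemma indicator_mem {A : Set X} (hA : IsClopen A) (hAc : IsCompact A) (v : V) :
    A.indicator (fun _ => v) ∈ Ccinf X R V := by
  constructor
  · intro t
    rw [Set.indicator_preimage]
    have h1 : IsOpen ((fun _ : X => v) ⁻¹' t) := by
      by_cases hv : v ∈ t <;> simp [Set.preimage_const, hv, isOpen_univ, isOpen_empty]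
    have h0 : IsOpen ((fun _ : X => (0 : V)) ⁻¹' t) := by
      by_cases hv : (0 : V) ∈ t <;> simp [Set.preimage_const, hv, isOpen_univ, isOpen_empty]
    rw [Set.ite]
    exact ((h1.inter hA.2).union (h0.sdiff hA.1))
  · exact IsCompact.of_isClosed_subset hAc isClosed_closure
      (closure_minimal (by apply Set.support_indicator_subset) hA.1)

/-- The basic functions, as linear maps `V → Ccinf X R V`. -/
noncomputable def bhom (hU : ∀ n, IsCompact (U n) ∧ IsOpen (U n)) (p : Idx U) :
    V →ₗ[R] Ccinf X R V where
  toFun v := ⟨(BSet U p.1).indicator fun _ => v,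
    indicator_mem R V ((isClopen_cellAt hU _ _)) (isCompact_BSet hU _) v⟩
  map_add' v w := Subtype.ext (by
    funext x
    by_cases hx : x ∈ BSet U p.1 <;>
      simp [Set.indicator_of_mem, Set.indicator_of_notMem, hx])
  map_smul' r v := Subtype.ext (by
    funext x
    by_cases hx : x ∈ BSet U p.1 <;>
      simp [Set.indicator_of_mem, Set.indicator_of_notMem, hx])

/-- The map `(Idx →₀ V) → Ccinf X R V`. -/
noncomputable def Phi (hU : ∀ n, IsCompact (U n) ∧ IsOpen (U n)) :
    (Idx U →₀ V) →ₗ[R] Ccinf X R V :=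
  Finsupp.lsum R (bhom U R V hU)

lemma Phi_apply (hU : ∀ n, IsCompact (U n) ∧ IsOpen (U n)) (c : Idx U →₀ V) (x : X) :
    ((Phi U R V hU c : Ccinf X R V) : X → V) x
      = ∑ p ∈ c.support, if x ∈ BSet U (p : ℕ × Finset ℕ) then c p else 0 := by
  rw [Phi, Finsupp.lsum_apply, Finsupp.sum]
  have : ((↑(∑ p ∈ c.support, bhom U R V hU p (c p)) : X → V))
      = ∑ p ∈ c.support, ((bhom U R V hU p (c p) : Ccinf X R V) : X → V) :=
    map_sum ((Ccinf X R V).subtype) _ _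
  rw [this, Finset.sum_apply]
  refine Finset.sum_congr rfl fun p _ => ?_
  simp [bhom, Set.indicator_apply]

lemma Phi_injective_aux (hU : ∀ n, IsCompact (U n) ∧ IsOpen (U n)) :
    ∀ (n : ℕ) (c : Idx U →₀ V), (∀ p ∈ c.support, (p : ℕ × Finset ℕ).1 < n) →
      Phi U R V hU c = 0 → c = 0 := by
  intro n
  induction n with
  | zero =>
    intro c hc _
    ext p
    by_contra hne
    exact absurd (hc p (Finsupp.mem_support_iff.2 (by simpa using hne))) (by omega)
  | succ n ih =>
    intro c hc h0
    have hval : ∀ x : X,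
        (∑ p ∈ c.support, if x ∈ BSet U (p : ℕ × Finset ℕ) then c p else 0) = 0 := by
      intro x
      rw [← Phi_apply U R V hU c x, h0]
      rfl
    have key : ∀ p : Idx U, p ∈ c.support → (p : ℕ × Finset ℕ).1 = n → c p = 0 := by
      intro p hmem hlev
      obtain ⟨xp, hxp⟩ : (BSet U (p : ℕ × Finset ℕ)).Nonempty := p.2.2.1
      have hsub : (p : ℕ × Finset ℕ).2 ⊆ Finset.range n := hlev ▸ p.2.1
      by_cases hse : (p : ℕ × Finset ℕ).2 = ∅
      · have h1 := hval xp
        rw [Finset.sum_eq_single_of_mem p hmem ?_] at h1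
        · rwa [if_pos hxp] at h1
        · intro q hq hne
          rw [if_neg]
          intro hxq
          rcases lt_or_eq_of_le (Nat.lt_succ_iff.1 (hc q hq)) with hlt | heq
          · have h2 := (hxp (q : ℕ × Finset ℕ).1 (by omega)).1 (mem_U_of_mem_BSet hxq)
            rcases Finset.mem_insert.1 h2 with h' | h'
            · omega
            · rw [hse] at h'
              exact absurd h' (Finset.notMem_empty _)
          · exact hne (Subtype.ext (BSet_inj q.2 p.2 (by omega) hxq hxp))
      · obtain ⟨xm, hxm⟩ : (cellAt U ((p : ℕ × Finset ℕ).1 + 1)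
            (p : ℕ × Finset ℕ).2).Nonempty := p.2.2.2.resolve_left hse
        have hxmn : xm ∉ U n := fun h => by
          have h2 := (hxm n (by omega)).1 h
          exact absurd (Finset.mem_range.1 (hsub h2)) (lt_irrefl _)
        have hdiff : (∑ q ∈ c.support,
            ((if xp ∈ BSet U (q : ℕ × Finset ℕ) then c q else 0)
              - (if xm ∈ BSet U (q : ℕ × Finset ℕ) then c q else 0))) = c p := by
          rw [Finset.sum_eq_single_of_mem p hmem ?_]
          · rw [if_pos hxp, if_neg (fun hxq => hxmn (hlev ▸ mem_U_of_mem_BSet hxq)), sub_zero]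
          · intro q hq hne
            rcases lt_or_eq_of_le (Nat.lt_succ_iff.1 (hc q hq)) with hlt | heq
            · have hagree : ∀ i, i < n → (xp ∈ U i ↔ xm ∈ U i) := by
                intro i hi
                rw [hxp i (by omega), hxm i (by omega), Finset.mem_insert]
                constructor
                · rintro (h' | h')
                  · exact absurd h' (by omega)
                  · exact h'
                · exact fun h' => Or.inr h'
              have hmemiff : xp ∈ BSet U (q : ℕ × Finset ℕ) ↔ xm ∈ BSet U (q : ℕ × Finset ℕ) := by
                constructor <;> intro hx i hi <;>
                  [rw [← hagree i (by omega)]; rw [hagree i (by omega)]] <;> exact hx i hi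
              by_cases hxq : xp ∈ BSet U (q : ℕ × Finset ℕ)
              · rw [if_pos hxq, if_pos (hmemiff.1 hxq), sub_self]
              · rw [if_neg hxq, if_neg (fun h => hxq (hmemiff.2 h)), sub_self]
            · rw [if_neg (fun hxq => hne (Subtype.ext (BSet_inj q.2 p.2 (by omega) hxq hxp))),
                if_neg (fun hxq => hxmn (heq ▸ mem_U_of_mem_BSet hxq)), sub_self]
        rw [Finset.sum_sub_distrib, hval xp, hval xm, sub_zero] at hdiff
        exact hdiff.symm
    refine ih c (fun p hp => ?_) h0
    have h1 := hc p hp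
    rcases lt_or_eq_of_le (Nat.lt_succ_iff.1 h1) with hlt | heq
    · exact hlt
    · exact absurd (key p hp heq) (Finsupp.mem_support_iff.1 hp)

lemma coe_sum_apply {α : Type*} (t : Finset α) (g : α → Ccinf X R V) (x : X) :
    ((∑ a ∈ t, g a : Ccinf X R V) : X → V) x = ∑ a ∈ t, ((g a : Ccinf X R V) : X → V) x := by
  rw [show ((∑ a ∈ t, g a : Ccinf X R V) : X → V)
      = ∑ a ∈ t, ((g a : Ccinf X R V) : X → V) from map_sum ((Ccinf X R V).subtype) g t,
    Finset.sum_apply]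

lemma Phi_surjective_aux (hU : ∀ n, IsCompact (U n) ∧ IsOpen (U n)) :
    ∀ (n : ℕ) (f : X → V),
      (∀ x y : X, (∀ i < n, (x ∈ U i ↔ y ∈ U i)) → f x = f y) →
      (∀ x : X, (∀ i < n, x ∉ U i) → f x = 0) →
      ∃ c : Idx U →₀ V, ((Phi U R V hU c : Ccinf X R V) : X → V) = f := by
  intro n
  induction n with
  | zero =>
    intro f _ hvan
    refine ⟨0, ?_⟩
    funext x
    rw [map_zero]
    simp only [ZeroMemClass.coe_zero, Pi.zero_apply]
    exact (hvan x (fun i hi => absurd hi (Nat.not_lt_zero i))).symm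
  | succ n ih =>
    intro f hconst hvan
    set tr : X → Finset ℕ := fun x => (Finset.range n).filter (fun i => x ∈ U i) with htr
    have htr_sub : ∀ x, tr x ⊆ Finset.range n := fun x => Finset.filter_subset _ _
    have htr_mem : ∀ (x : X), ∀ i, i < n → (x ∈ U i ↔ i ∈ tr x) := by
      intro x i hi
      simp [htr, Finset.mem_filter, Finset.mem_range, hi]
    have hBSet_iff : ∀ (x : X) (s : Finset ℕ), s ⊆ Finset.range n →
        (x ∈ BSet U (n, s) ↔ (x ∈ U n ∧ tr x = s)) := by
      intro x s hs
      constructor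
      · intro hx
        refine ⟨(hx n (by omega)).2 (Finset.mem_insert_self _ _), ?_⟩
        ext i
        by_cases hi : i < n
        · rw [← htr_mem x i hi, hx i (by omega), Finset.mem_insert]
          constructor
          · rintro (h' | h')
            · exact absurd h' (by omega)
            · exact h'
          · exact fun h' => Or.inr h'
        · constructor
          · intro h'
            exact absurd (Finset.mem_range.1 (htr_sub x h')) hi
          · intro h'
            exact absurd (Finset.mem_range.1 (hs h')) hi
      · rintro ⟨hxn, rfl⟩
        intro i hi
        by_cases hin : i < n
        · rw [Finset.mem_insert]
          constructor
          · intro h'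
            exact Or.inr ((htr_mem x i hin).1 h')
          · rintro (rfl | h')
            · exact hxn
            · exact (htr_mem x i hin).2 h'
        · have hni : n = i := by omega
          subst hni
          exact iff_of_true hxn (Finset.mem_insert_self _ _)
    set wval : ∀ s : Finset ℕ, Good U (n, s) → V := fun s h =>
      f h.2.1.choose - (if hse : s = ∅ then 0 else f (h.2.2.resolve_left hse).choose)
      with hwval
    set c₀ : Idx U →₀ V := ∑ s ∈ (Finset.range n).powerset,
      if h : Good U (n, s) then Finsupp.single ⟨(n, s), h⟩ (wval s h) else 0 with hc₀
    have hPhic₀ : ∀ x : X, ((Phi U R V hU c₀ : Ccinf X R V) : X → V) x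
        = if h : x ∈ U n ∧ Good U (n, tr x) then wval (tr x) h.2 else 0 := by
      intro x
      rw [hc₀, map_sum, coe_sum_apply,
        Finset.sum_eq_single_of_mem (tr x) (Finset.mem_powerset.2 (htr_sub x)) ?_]
      · by_cases hg : Good U (n, tr x)
        · rw [dif_pos hg]
          simp only [Phi, Finsupp.lsum_single]
          show (BSet U (n, tr x)).indicator (fun _ => wval (tr x) hg) x = _
          by_cases hxn : x ∈ U n
          · rw [Set.indicator_of_mem ((hBSet_iff x (tr x) (htr_sub x)).2 ⟨hxn, rfl⟩),
              dif_pos ⟨hxn, hg⟩]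
          · rw [Set.indicator_of_notMem
              (fun h => hxn ((hBSet_iff x (tr x) (htr_sub x)).1 h).1),
              dif_neg (fun h => hxn h.1)]
        · rw [dif_neg hg, map_zero, dif_neg (fun h => hg h.2)]
          rfl
      · intro s hsp hne
        by_cases hg : Good U (n, s)
        · rw [dif_pos hg]
          simp only [Phi, Finsupp.lsum_single]
          show (BSet U (n, s)).indicator (fun _ => wval s hg) x = 0
          exact Set.indicator_of_notMem (fun hx =>
            hne (((hBSet_iff x s (Finset.mem_powerset.1 hsp)).1 hx).2.symm)) _
        · rw [dif_neg hg, map_zero]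
          rfl
    -- common computation : value of f on the plus witness
    have hplus_eq : ∀ (x : X), x ∈ U n → ∀ (hgood : Good U (n, tr x)),
        f x = f hgood.2.1.choose := by
      intro x hxn hgood
      have hplus := hgood.2.1.choose_spec
      apply hconst
      intro i hi
      by_cases hin : i < n
      · rw [htr_mem x i hin, hplus i hi, Finset.mem_insert]
        constructor
        · exact fun h' => Or.inr h'
        · rintro (h' | h')
          · exact absurd h' (by omega)
          · exact h'
      · have hni : n = i := by omega
        subst hni
        exact iff_of_true hxn ((hplus n (by omega)).2 (Finset.mem_insert_self _ _))
    -- the asymmetric case of constancy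
    have hxy : ∀ x y : X, (∀ i < n, (x ∈ U i ↔ y ∈ U i)) → tr x = tr y →
        x ∈ U n → y ∉ U n →
        f x - ((Phi U R V hU c₀ : Ccinf X R V) : X → V) x
          = f y - ((Phi U R V hU c₀ : Ccinf X R V) : X → V) y := by
      intro x y hagree htrxy hxn hyn
      have hgood : Good U (n, tr x) := by
        refine ⟨htr_sub x, ⟨x, (hBSet_iff x (tr x) (htr_sub x)).2 ⟨hxn, rfl⟩⟩, ?_⟩
        by_cases hse : tr x = ∅
        · exact Or.inl hse
        · refine Or.inr ⟨y, ?_⟩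
          intro i hi
          by_cases hin : i < n
          · rw [htr_mem y i hin, htrxy]
          · have hni : n = i := by omega
            subst hni
            exact iff_of_false hyn (fun h' =>
              absurd (Finset.mem_range.1 (htr_sub x h')) (by omega))
      have hxplus : f x = f hgood.2.1.choose := hplus_eq x hxn hgood
      rw [hPhic₀ x, hPhic₀ y, dif_pos ⟨hxn, hgood⟩, dif_neg (fun h => hyn h.1)]
      by_cases hse : tr x = ∅
      · have hfy : f y = 0 := by
          apply hvan
          intro i hi
          by_cases hin : i < n
          · intro h'
            have h2 := (htr_mem y i hin).1 h'
            rw [← htrxy, hse] at h2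
            exact absurd h2 (Finset.notMem_empty _)
          · have hni : n = i := by omega
            subst hni
            exact hyn
        simp only [hwval]
        rw [dif_pos hse, ← hxplus, hfy]
        abel
      · have hminus := (hgood.2.2.resolve_left hse).choose_spec
        have hyminus : f y = f (hgood.2.2.resolve_left hse).choose := by
          apply hconst
          intro i hi
          by_cases hin : i < n
          · rw [htr_mem y i hin, ← htrxy, hminus i hi]
          · have hni : n = i := by omega
            subst hni
            refine iff_of_false hyn (fun h' =>
              absurd (Finset.mem_range.1 (htr_sub x ((hminus n (by omega)).1 h'))) (by omega))
        simp only [hwval]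
        rw [dif_neg hse, ← hxplus, ← hyminus]
        abel
    have hgconst : ∀ x y : X, (∀ i < n, (x ∈ U i ↔ y ∈ U i)) →
        f x - ((Phi U R V hU c₀ : Ccinf X R V) : X → V) x
          = f y - ((Phi U R V hU c₀ : Ccinf X R V) : X → V) y := by
      intro x y hagree
      have htrxy : tr x = tr y := by
        ext i
        simp only [htr, Finset.mem_filter, Finset.mem_range]
        exact and_congr_right fun hi => hagree i hi
      by_cases hxn : x ∈ U n <;> by_cases hyn : y ∈ U n
      · have hfxy : f x = f y := by
          apply hconst
          intro i hi
          by_cases hin : i < n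
          · exact hagree i hin
          · have hni : n = i := by omega
            subst hni
            exact iff_of_true hxn hyn
        rw [hPhic₀ x, hPhic₀ y, hfxy, htrxy]
        by_cases hgd : Good U (n, tr y)
        · rw [dif_pos ⟨hxn, hgd⟩, dif_pos ⟨hyn, hgd⟩]
        · rw [dif_neg (fun h => hgd h.2), dif_neg (fun h => hgd h.2)]
      · exact hxy x y hagree htrxy hxn hyn
      · exact (hxy y x (fun i hi => (hagree i hi).symm) htrxy.symm hyn hxn).symm
      · have hfxy : f x = f y := by
          apply hconst
          intro i hi
          by_cases hin : i < n
          · exact hagree i hin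
          · have hni : n = i := by omega
            subst hni
            exact iff_of_false hxn hyn
        rw [hPhic₀ x, hPhic₀ y, hfxy, dif_neg (fun h => hxn h.1), dif_neg (fun h => hyn h.1)]
    have hgvan : ∀ x : X, (∀ i < n, x ∉ U i) →
        f x - ((Phi U R V hU c₀ : Ccinf X R V) : X → V) x = 0 := by
      intro x hx
      have hse : tr x = ∅ := by
        ext i
        simp only [htr, Finset.mem_filter, Finset.mem_range, Finset.notMem_empty, iff_false,
          not_and]
        exact fun hi => hx i hi
      by_cases hxn : x ∈ U n
      · have hgood : Good U (n, tr x) :=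
          ⟨htr_sub x, ⟨x, (hBSet_iff x (tr x) (htr_sub x)).2 ⟨hxn, rfl⟩⟩, Or.inl hse⟩
        have hxplus : f x = f hgood.2.1.choose := hplus_eq x hxn hgood
        rw [hPhic₀ x, dif_pos ⟨hxn, hgood⟩]
        simp only [hwval]
        rw [dif_pos hse, ← hxplus]
        abel
      · have hfx : f x = 0 := by
          apply hvan
          intro i hi
          by_cases hin : i < n
          · exact hx i hin
          · have hni : n = i := by omega
            subst hni
            exact hxn
        rw [hPhic₀ x, dif_neg (fun h => hxn h.1), hfx, sub_zero]
    obtain ⟨c', hc'⟩ := ih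
      (fun x => f x - ((Phi U R V hU c₀ : Ccinf X R V) : X → V) x) hgconst hgvan
    refine ⟨c' + c₀, ?_⟩
    funext x
    rw [map_add]
    show ((Phi U R V hU c' : Ccinf X R V) : X → V) x
      + ((Phi U R V hU c₀ : Ccinf X R V) : X → V) x = f x
    rw [congrFun hc' x]
    abel

lemma mem_Ccinf_iff {f : X → V} :
    f ∈ Ccinf X R V ↔ IsLocallyConstant f ∧ HasCompactSupport f := Iff.rfl

end Topology

section Enum

lemma exists_enum (X : Type*) [TopologicalSpace X] [SecondCountableTopology X] :
    ∃ U : ℕ → Set X, (∀ n, IsCompact (U n) ∧ IsOpen (U n)) ∧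
      ∀ K : Set X, IsCompact K → IsOpen K → ∃ n, U n = K := by
  obtain ⟨b, hbc, -, hb⟩ := TopologicalSpace.exists_countable_basis X
  have hcnt : {K : Set X | IsCompact K ∧ IsOpen K}.Countable := by
    have := hbc.to_subtype
    refine Set.Countable.mono ?_
      (Set.countable_range fun t : Finset b => ⋃ i ∈ t, (i : Set X))
    rintro K ⟨hKc, hKo⟩
    obtain ⟨S, hSb, rfl⟩ := hb.open_eq_sUnion hKo
    have hcov : ⋃₀ S ⊆ ⋃ i : S, (i : Set X) := by
      rw [Set.sUnion_eq_iUnion]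
    obtain ⟨t, ht⟩ := IsCompact.elim_finite_subcover hKc (fun i : S => (i : Set X))
      (fun i => hb.isOpen (hSb i.2)) hcov
    refine ⟨t.map ⟨fun (i : ↥S) => (⟨(i : Set X), hSb i.2⟩ : ↥b),
      fun i j hij => by simpa [Subtype.ext_iff] using hij⟩, ?_⟩
    apply Set.Subset.antisymm
    · refine Set.iUnion₂_subset fun i hi => ?_
      obtain ⟨j, _, rfl⟩ := Finset.mem_map.1 hi
      exact Set.subset_sUnion_of_mem j.2
    · intro x hx
      obtain ⟨j, hjt, hxj⟩ := Set.mem_iUnion₂.1 (ht hx)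
      exact Set.mem_iUnion₂.2 ⟨_, Finset.mem_map_of_mem _ hjt, hxj⟩
  have hne : {K : Set X | IsCompact K ∧ IsOpen K}.Nonempty :=
    ⟨∅, isCompact_empty, isOpen_empty⟩
  obtain ⟨U, hU⟩ := hcnt.exists_eq_range hne
  refine ⟨U, fun n => ?_, fun K hc ho => ?_⟩
  · have h2 : U n ∈ {K : Set X | IsCompact K ∧ IsOpen K} := hU ▸ Set.mem_range_self n
    exact h2
  · have h2 : K ∈ Set.range U := hU ▸ (⟨hc, ho⟩ : K ∈ {K : Set X | IsCompact K ∧ IsOpen K})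
    exact h2

lemma exists_level {X : Type*} [TopologicalSpace X] {U : ℕ → Set X}
    (hUo : ∀ n, IsOpen (U n))
    (hUs : ∀ K : Set X, IsCompact K → IsOpen K → ∃ n, U n = K)
    (hX : ∀ x : X, ∀ O ∈ nhds x, ∃ s : Set X, IsCompact s ∧ IsOpen s ∧ x ∈ s ∧ s ⊆ O)
    {V : Type*} [AddCommGroup V] (f : X → V) (hlc : IsLocallyConstant f)
    (hcs : HasCompactSupport f) :
    ∃ n, (∀ x y : X, (∀ i < n, (x ∈ U i ↔ y ∈ U i)) → f x = f y) ∧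
      (∀ x : X, (∀ i < n, x ∉ U i) → f x = 0) := by
  have hpt : ∀ x : X, ∃ m : ℕ, x ∈ U m ∧ ∀ y ∈ U m, f y = f x := by
    intro x
    obtain ⟨O, hO, hxO, hfO⟩ := hlc.exists_open x
    obtain ⟨s, hsc, hso, hxs, hsO⟩ := hX x O (hO.mem_nhds hxO)
    obtain ⟨m, hm⟩ := hUs s hsc hso
    exact ⟨m, hm ▸ hxs, fun y hy => hfO y (hsO (hm ▸ hy))⟩
  choose m hm1 hm2 using hpt
  obtain ⟨t, ht⟩ := IsCompact.elim_finite_subcover hcs (fun x : X => U (m x))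
    (fun x => hUo (m x)) (fun y _ => Set.mem_iUnion.2 ⟨y, hm1 y⟩)
  refine ⟨(t.sup m) + 1, ?_, ?_⟩
  · intro x y hagree
    by_cases hx : ∃ z ∈ t, x ∈ U (m z)
    · obtain ⟨z, hzt, hxz⟩ := hx
      have hmzN : m z < t.sup m + 1 := Nat.lt_succ_of_le (Finset.le_sup hzt)
      have hyz : y ∈ U (m z) := (hagree (m z) hmzN).1 hxz
      rw [hm2 z x hxz, hm2 z y hyz]
    · have hxs : x ∉ tsupport f := fun hmem => hx (by simpa using ht hmem)
      have hys : y ∉ tsupport f := by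
        intro hmem
        obtain ⟨z, hzt, hyz⟩ : ∃ z ∈ t, y ∈ U (m z) := by simpa using ht hmem
        exact hx ⟨z, hzt,
          (hagree (m z) (Nat.lt_succ_of_le (Finset.le_sup hzt))).2 hyz⟩
      rw [image_eq_zero_of_notMem_tsupport hxs, image_eq_zero_of_notMem_tsupport hys]
  · intro x hx
    apply image_eq_zero_of_notMem_tsupport
    intro hmem
    obtain ⟨z, hzt, hxz⟩ : ∃ z ∈ t, x ∈ U (m z) := by simpa using ht hmem
    exact hx (m z) (Nat.lt_succ_of_le (Finset.le_sup hzt)) hxz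

end Enum

section Main

variable [T2Space X] (U : ℕ → Set X)
variable (R : Type*) [CommRing R] (V : Type*) [AddCommGroup V] [Module R V]

lemma Phi_bijective (hU : ∀ n, IsCompact (U n) ∧ IsOpen (U n))
    (hUs : ∀ K : Set X, IsCompact K → IsOpen K → ∃ n, U n = K)
    (hX : ∀ x : X, ∀ O ∈ nhds x, ∃ s : Set X, IsCompact s ∧ IsOpen s ∧ x ∈ s ∧ s ⊆ O) :
    Function.Bijective (Phi U R V hU) := by
  constructor
  · intro c c' h
    have h0 : Phi U R V hU (c - c') = 0 := by rw [map_sub, h, sub_self]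
    have h1 := Phi_injective_aux U R V hU
      (((c - c').support.sup fun p => (p : ℕ × Finset ℕ).1) + 1) (c - c')
      (fun p hp => Nat.lt_succ_of_le
        (Finset.le_sup (f := fun p : Idx U => (p : ℕ × Finset ℕ).1) hp)) h0
    exact sub_eq_zero.1 h1
  · intro f
    have hf := (mem_Ccinf_iff R V).1 f.2
    obtain ⟨n, h1, h2⟩ := exists_level (fun n => (hU n).2) hUs hX (f : X → V) hf.1 hf.2
    obtain ⟨c, hc⟩ := Phi_surjective_aux U R V hU n f h1 h2
    exact ⟨c, Subtype.ext hc⟩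

end Main

end Stmt15Aux

theorem stmt15 (X : Type*) [TopologicalSpace X] [T2Space X]
    [SecondCountableTopology X]
    (hX : ∀ x : X, ∀ U ∈ nhds x, ∃ s : Set X, IsCompact s ∧ IsOpen s ∧ x ∈ s ∧ s ⊆ U)
    (R : Type*) [CommRing R] (V : Type*) [AddCommGroup V] [Module R V] :
    Module.Free R (Ccinf X R R) ∧
    ∃ e : (Ccinf X R R ⊗[R] V) ≃ₗ[R] Ccinf X R V,
      ∀ (f : Ccinf X R R) (v : V),
        ((e (f ⊗ₜ[R] v) : Ccinf X R V) : X → V) = fun x => (f : X → R) x • v := by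
  classical
  obtain ⟨U, hU, hUs⟩ := Stmt15Aux.exists_enum X
  have hbijR := Stmt15Aux.Phi_bijective U R R hU hUs hX
  have hbijV := Stmt15Aux.Phi_bijective U R V hU hUs hX
  let eR : (Stmt15Aux.Idx U →₀ R) ≃ₗ[R] Ccinf X R R :=
    LinearEquiv.ofBijective _ hbijR
  let eV : (Stmt15Aux.Idx U →₀ V) ≃ₗ[R] Ccinf X R V :=
    LinearEquiv.ofBijective _ hbijV
  constructor
  · exact Module.Free.of_equiv eR
  · refine ⟨(TensorProduct.congr eR.symm (LinearEquiv.refl R V)).trans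
      ((TensorProduct.finsuppScalarLeft R V _).trans eV), ?_⟩
    intro f v
    funext x
    simp only [LinearEquiv.trans_apply, TensorProduct.congr_tmul, LinearEquiv.refl_apply,
      TensorProduct.finsuppScalarLeft_apply_tmul]
    rw [Finsupp.sum, map_sum, Stmt15Aux.coe_sum_apply]
    have hterm : ∀ i ∈ (eR.symm f).support,
        ((eV (Finsupp.single i ((eR.symm f) i • v)) : Ccinf X R V) : X → V) x
          = (if x ∈ Stmt15Aux.BSet U (i : ℕ × Finset ℕ) then (eR.symm f) i else 0) • v := by
      intro i _
      show ((Stmt15Aux.Phi U R V hU (Finsupp.single i ((eR.symm f) i • v))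
        : Ccinf X R V) : X → V) x = _
      simp only [Stmt15Aux.Phi, Finsupp.lsum_single]
      show (Stmt15Aux.BSet U (i : ℕ × Finset ℕ)).indicator
        (fun _ => (eR.symm f) i • v) x = _
      by_cases hx : x ∈ Stmt15Aux.BSet U (i : ℕ × Finset ℕ)
      · rw [Set.indicator_of_mem hx, if_pos hx]
      · rw [Set.indicator_of_notMem hx, if_neg hx, zero_smul]
    rw [Finset.sum_congr rfl hterm, ← Finset.sum_smul,
      ← Stmt15Aux.Phi_apply U R R hU (eR.symm f) x]
    have hPhiR : Stmt15Aux.Phi U R R hU (eR.symm f) = f := eR.apply_symm_apply f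
    rw [hPhiR]
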